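/- For q ∈ (0,1), the theta constant θ₄(ω) = G·∏_{n=1}^∞ (1 - 2q^{2n-1} cos 2ω + q^{4n-2}) with G = ∏_{n=1}^∞ (1 - q^{2n}) is strictly positive and strictly monotonically increasing as a function of ω on the interval (0, π/2). In particular θ₄'(ω) ≠ 0 for ω ∈ (0, π/2). -/

import Mathlib

open Real

lemma abs_log_le_aux {x c d : ℝ} (hc0 : 0 < c) (hc1 : c ≤ 1) (hcx : c ≤ x)
    (hd : |x - 1| ≤ d) : |Real.log x| ≤ d / c := by
  have hx : 0 < x := lt_of_lt_of_le hc0 hcx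
  have hd0 : 0 ≤ d := le_trans (abs_nonneg _) hd
  obtain ⟨hdl, hdr⟩ := abs_le.mp hd
  rcases le_total 1 x with h | h
  · rw [abs_of_nonneg (Real.log_nonneg h)]
    have h1 : Real.log x ≤ x - 1 := Real.log_le_sub_one_of_pos hx
    have h2 : d ≤ d / c := by rw [le_div_iff₀ hc0]; nlinarith
    linarith
  · rw [abs_of_nonpos (Real.log_nonpos (by linarith) h)]
    have hinv := Real.log_le_sub_one_of_pos (inv_pos.mpr hx)
    rw [Real.log_inv] at hinv
    have he : x⁻¹ - 1 = (1 - x) / x := by field_simp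
    have h2 : (1 - x) / x ≤ d / c := div_le_div₀ hd0 (by linarith) hc0 hcx
    rw [he] at hinv; linarith

noncomputable def thff (q : ℝ) (n : ℕ) (ω : ℝ) : ℝ :=
  1 - 2 * q ^ (2 * n + 1) * Real.cos (2 * ω) + (q ^ (2 * n + 1)) ^ 2

lemma tha_pos {q : ℝ} (hq0 : 0 < q) (n : ℕ) : 0 < q ^ (2 * n + 1) := pow_pos hq0 _

lemma tha_le {q : ℝ} (hq0 : 0 < q) (hq1 : q < 1) (n : ℕ) : q ^ (2 * n + 1) ≤ q := by
  calc q ^ (2 * n + 1) ≤ q ^ 1 := pow_le_pow_of_le_one hq0.le hq1.le (by omega)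
  _ = q := pow_one q

lemma thsummable_a {q : ℝ} (hq0 : 0 < q) (hq1 : q < 1) :
    Summable (fun n : ℕ => q ^ (2 * n + 1)) := by
  have h : Summable (fun n : ℕ => q * (q ^ 2) ^ n) :=
    (summable_geometric_of_lt_one (by positivity) (by nlinarith)).mul_left q
  refine h.congr fun n => ?_
  rw [pow_add, pow_mul, pow_one, mul_comm]

lemma thff_ge {q : ℝ} (hq0 : 0 < q) (hq1 : q < 1) (n : ℕ) (ω : ℝ) :
    (1 - q) ^ 2 ≤ thff q n ω := by
  have h1 := tha_pos hq0 (q := q) n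
  have h2 := tha_le hq0 hq1 (q := q) n
  have h3 := Real.cos_le_one (2 * ω)
  have h4 := Real.neg_one_le_cos (2 * ω)
  unfold thff
  nlinarith [sq_nonneg (q ^ (2 * n + 1) - q), sq_nonneg (1 - q ^ (2 * n + 1))]

lemma thff_pos {q : ℝ} (hq0 : 0 < q) (hq1 : q < 1) (n : ℕ) (ω : ℝ) : 0 < thff q n ω :=
  lt_of_lt_of_le (by nlinarith) (thff_ge hq0 hq1 n ω)

lemma thff_sub_one {q : ℝ} (hq0 : 0 < q) (hq1 : q < 1) (n : ℕ) (ω : ℝ) :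
    |thff q n ω - 1| ≤ 4 * q ^ (2 * n + 1) := by
  have h1 := tha_pos hq0 (q := q) n
  have h2 := tha_le hq0 hq1 (q := q) n
  have h3 := Real.cos_le_one (2 * ω)
  have h4 := Real.neg_one_le_cos (2 * ω)
  rw [abs_le]; unfold thff; constructor <;> nlinarith

lemma thlog_bound {q : ℝ} (hq0 : 0 < q) (hq1 : q < 1) (n : ℕ) (ω : ℝ) :
    |Real.log (thff q n ω)| ≤ 4 * q ^ (2 * n + 1) / (1 - q) ^ 2 :=
  abs_log_le_aux (by nlinarith) (by nlinarith) (thff_ge hq0 hq1 n ω)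
    (thff_sub_one hq0 hq1 n ω)

lemma thsummable_u {q : ℝ} (hq0 : 0 < q) (hq1 : q < 1) :
    Summable (fun n : ℕ => 4 * q ^ (2 * n + 1) / (1 - q) ^ 2) := by
  have := ((thsummable_a hq0 hq1).mul_left 4).div_const ((1 - q) ^ 2)
  simpa [mul_div_assoc] using this

lemma thsummable_log {q : ℝ} (hq0 : 0 < q) (hq1 : q < 1) (ω : ℝ) :
    Summable (fun n : ℕ => Real.log (thff q n ω)) :=
  Summable.of_norm_bounded (thsummable_u hq0 hq1)
    (fun n => by simpa [Real.norm_eq_abs] using thlog_bound hq0 hq1 n ω)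

lemma thff_hasDerivAt {q : ℝ} (n : ℕ) (ω : ℝ) :
    HasDerivAt (thff q n) (4 * q ^ (2 * n + 1) * Real.sin (2 * ω)) ω := by
  have hc : HasDerivAt (fun t : ℝ => Real.cos (2 * t)) (-Real.sin (2 * ω) * 2) ω := by
    simpa using ((hasDerivAt_id ω).const_mul 2).cos
  have h2 := ((hc.const_mul (2 * q ^ (2 * n + 1))).const_sub 1).add_const
    ((q ^ (2 * n + 1)) ^ 2)
  refine h2.congr_deriv ?_
  ring

lemma thlog_hasDerivAt {q : ℝ} (hq0 : 0 < q) (hq1 : q < 1) (n : ℕ) (ω : ℝ) :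
    HasDerivAt (fun t => Real.log (thff q n t))
      (4 * q ^ (2 * n + 1) * Real.sin (2 * ω) / thff q n ω) ω :=
  (thff_hasDerivAt n ω).log (ne_of_gt (thff_pos hq0 hq1 n ω))

lemma thderiv_bound {q : ℝ} (hq0 : 0 < q) (hq1 : q < 1) (n : ℕ) (ω : ℝ) :
    ‖4 * q ^ (2 * n + 1) * Real.sin (2 * ω) / thff q n ω‖ ≤
      4 * q ^ (2 * n + 1) / (1 - q) ^ 2 := by
  have h1 := tha_pos hq0 (q := q) n
  rw [Real.norm_eq_abs, abs_div, abs_of_pos (thff_pos hq0 hq1 n ω)]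
  refine div_le_div₀ (by positivity) ?_ (by nlinarith) (thff_ge hq0 hq1 n ω)
  rw [abs_mul, abs_of_pos (by positivity : (0:ℝ) < 4 * q ^ (2 * n + 1))]
  nlinarith [Real.abs_sin_le_one (2 * ω), abs_nonneg (Real.sin (2 * ω))]

noncomputable def thS (q : ℝ) (ω : ℝ) : ℝ := ∑' n, Real.log (thff q n ω)

lemma thS_hasDerivAt {q : ℝ} (hq0 : 0 < q) (hq1 : q < 1) (ω : ℝ) :
    HasDerivAt (thS q) (∑' n, 4 * q ^ (2 * n + 1) * Real.sin (2 * ω) / thff q n ω) ω :=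
  hasDerivAt_tsum (thsummable_u hq0 hq1) (fun n y => thlog_hasDerivAt hq0 hq1 n y)
    (fun n y => thderiv_bound hq0 hq1 n y) (thsummable_log hq0 hq1 0) ω

lemma thprod_eq {q : ℝ} (hq0 : 0 < q) (hq1 : q < 1) (ω : ℝ) :
    (∏' n, thff q n ω) = Real.exp (thS q ω) := by
  have := Real.rexp_tsum_eq_tprod (f := fun n => thff q n ω)
    (fun n => thff_pos hq0 hq1 n ω) (thsummable_log hq0 hq1 ω)
  exact this.symm


/-- For real nome `q ∈ (0,1)` (rectangular lattice), the Jacobi theta function `θ₄`,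
given by its infinite product, is positive and strictly increasing on `(0, π/2)`;
in particular `θ₄'(ω) ≠ 0` there. -/
theorem stmt4 (q : ℝ) (hq : q ∈ Set.Ioo (0:ℝ) 1) :
    let G : ℝ := ∏' n : ℕ, (1 - q ^ (2 * (n + 1)))
    let θ₄ : ℝ → ℝ := fun ω =>
      G * ∏' n : ℕ, (1 - 2 * q ^ (2 * (n + 1) - 1) * Real.cos (2 * ω) + q ^ (4 * (n + 1) - 2))
    (∀ ω ∈ Set.Ioo 0 (Real.pi / 2), 0 < θ₄ ω) ∧
    StrictMonoOn θ₄ (Set.Ioo 0 (Real.pi / 2)) ∧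
    ∀ ω ∈ Set.Ioo 0 (Real.pi / 2), deriv θ₄ ω ≠ 0 := by
  obtain ⟨hq0, hq1⟩ := hq
  intro G θ₄
  -- positivity of G
  have hGfac : ∀ n : ℕ, 0 < 1 - q ^ (2 * (n + 1)) := fun n => by
    have : q ^ (2 * (n + 1)) < 1 := pow_lt_one₀ hq0.le hq1 (by omega)
    linarith
  have hGle : ∀ n : ℕ, q ^ (2 * (n + 1)) ≤ q := fun n => by
    calc q ^ (2 * (n + 1)) ≤ q ^ 1 := pow_le_pow_of_le_one hq0.le hq1.le (by omega)
    _ = q := pow_one q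
  have hGsumb : Summable (fun n : ℕ => q ^ (2 * (n + 1)) / (1 - q)) := by
    have h : Summable (fun n : ℕ => q ^ 2 * (q ^ 2) ^ n) :=
      (summable_geometric_of_lt_one (by positivity) (by nlinarith)).mul_left (q ^ 2)
    refine (h.congr fun n => ?_).div_const (1 - q)
    rw [← pow_mul, ← pow_add]
    congr 1
    ring
  have hGsum : Summable (fun n : ℕ => Real.log (1 - q ^ (2 * (n + 1)))) := by
    refine Summable.of_norm_bounded hGsumb fun n => ?_
    have hb := pow_pos hq0 (2 * (n + 1))
    simp only [Real.norm_eq_abs]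
    refine abs_log_le_aux (by linarith) (by linarith) (by linarith [hGle n]) ?_
    rw [abs_of_nonpos (by linarith)]
    linarith
  have hG : 0 < G := by
    have h : Real.exp (∑' n : ℕ, Real.log (1 - q ^ (2 * (n + 1)))) =
        ∏' n : ℕ, (1 - q ^ (2 * (n + 1))) :=
      Real.rexp_tsum_eq_tprod (fun n => hGfac n) hGsum
    show 0 < ∏' n : ℕ, (1 - q ^ (2 * (n + 1)))
    rw [← h]
    exact Real.exp_pos _
  -- rewrite θ₄
  have hθ : θ₄ = fun ω => G * Real.exp (thS q ω) := by
    funext ω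
    show G * ∏' n : ℕ,
      (1 - 2 * q ^ (2 * (n + 1) - 1) * Real.cos (2 * ω) + q ^ (4 * (n + 1) - 2)) = _
    rw [show (fun n : ℕ =>
        1 - 2 * q ^ (2 * (n + 1) - 1) * Real.cos (2 * ω) + q ^ (4 * (n + 1) - 2))
        = fun n => thff q n ω by
      funext n
      unfold thff
      rw [show 2 * (n + 1) - 1 = 2 * n + 1 by omega,
        show 4 * (n + 1) - 2 = (2 * n + 1) * 2 by omega, pow_mul]]
    rw [thprod_eq hq0 hq1 ω]
  -- derivative
  have hD : ∀ ω : ℝ, HasDerivAt θ₄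
      (G * (Real.exp (thS q ω) * ∑' n, 4 * q ^ (2 * n + 1) * Real.sin (2 * ω) / thff q n ω)) ω := by
    intro ω
    rw [hθ]
    exact ((thS_hasDerivAt hq0 hq1 ω).exp).const_mul G
  have hDpos : ∀ ω ∈ Set.Ioo 0 (Real.pi / 2),
      0 < ∑' n, 4 * q ^ (2 * n + 1) * Real.sin (2 * ω) / thff q n ω := by
    intro ω hω
    have hsin : 0 < Real.sin (2 * ω) :=
      Real.sin_pos_of_pos_of_lt_pi (by linarith [hω.1]) (by linarith [hω.2])
    refine Summable.tsum_pos (Summable.of_norm_bounded (thsummable_u hq0 hq1)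
      (fun n => thderiv_bound hq0 hq1 n ω)) (fun n => ?_) 0 ?_
    · exact div_nonneg (by positivity) (thff_pos hq0 hq1 n ω).le
    · exact div_pos (by positivity) (thff_pos hq0 hq1 0 ω)
  refine ⟨?_, ?_, ?_⟩
  · intro ω hω
    rw [hθ]
    positivity
  · refine strictMonoOn_of_deriv_pos (convex_Ioo _ _)
      (fun x _ => (hD x).continuousAt.continuousWithinAt) (fun x hx => ?_)
    rw [interior_Ioo] at hx
    rw [(hD x).deriv]
    have := hDpos x hx
    positivity
  · intro ω hω
    rw [(hD ω).deriv]
    have := hDpos ω hω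
    positivity
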